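/- Let G be a finite simple graph that is {diamond, K2 ∪ 2K1}-free and such that both G and its complement Ḡ are connected. If U is a homogeneous set of G that contains two non-adjacent vertices, then G is bipartite. -/

import Mathlib

open SimpleGraph

/-- `G` is `H`-free: no induced subgraph of `G` is isomorphic to `H`
(an induced copy is a graph embedding). -/
def InducedFree {α β : Type*} (H : SimpleGraph β) (G : SimpleGraph α) : Prop :=
  ¬ Nonempty (H ↪g G)

/-- The diamond: `K4` minus the edge `2-3`. -/
def diamond : SimpleGraph (Fin 4) :=
  fromEdgeSet {s(0,1), s(0,2), s(0,3), s(1,2), s(1,3)}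

/-- `K2 ∪ 2K1`: one edge `0-1` together with two isolated vertices `2,3`
(the complement of the diamond). -/
def K2u2K1 : SimpleGraph (Fin 4) := fromEdgeSet {s(0,1)}

/-- `U` is a homogeneous set of `G`: `2 ≤ |U| ≤ |V| − 1` and every vertex
outside `U` is adjacent to all of `U` or to none of `U`. -/
def IsHomogeneousSet {V : Type*} [Fintype V] (G : SimpleGraph V) (U : Set V) : Prop :=
  2 ≤ U.ncard ∧ U.ncard ≤ Fintype.card V - 1 ∧
    ∀ v ∉ U, (∀ u ∈ U, G.Adj v u) ∨ (∀ u ∈ U, ¬ G.Adj v u)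

/-- `G` is bipartite: its vertex set can be partitioned into two independent sets. -/
def IsBipartite {V : Type*} (G : SimpleGraph V) : Prop :=
  ∃ A : Set V, ∀ u v : V, G.Adj u v → ((u ∈ A ∧ v ∉ A) ∨ (u ∉ A ∧ v ∈ A))

lemma no_diamond {V : Type*} {G : SimpleGraph V} (h : InducedFree diamond G)
    {a b c d : V} (hcd' : c ≠ d)
    (hab : G.Adj a b) (hac : G.Adj a c) (had : G.Adj a d)
    (hbc : G.Adj b c) (hbd : G.Adj b d) (hcd : ¬ G.Adj c d) : False := by
  have hba := hab.symm; have hca := hac.symm; have hda := had.symm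
  have hcb := hbc.symm; have hdb := hbd.symm
  have hdc : ¬ G.Adj d c := fun h' => hcd h'.symm
  have h1 := hab.ne; have h2 := hac.ne; have h3 := had.ne
  have h4 := hbc.ne; have h5 := hbd.ne
  apply h
  refine ⟨⟨⟨![a,b,c,d], ?_⟩, ?_⟩⟩
  · intro i j hij
    fin_cases i <;> fin_cases j <;> simp_all
  · intro i j
    fin_cases i <;> fin_cases j <;>
      simp_all [diamond, Sym2.eq_iff, DFunLike.coe]

lemma no_codiamond {V : Type*} {G : SimpleGraph V} (h : InducedFree K2u2K1 G)
    {a b c d : V} (hac' : a ≠ c) (had' : a ≠ d) (hbc' : b ≠ c) (hbd' : b ≠ d) (hcd' : c ≠ d)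
    (hab : G.Adj a b) (hac : ¬ G.Adj a c) (had : ¬ G.Adj a d)
    (hbc : ¬ G.Adj b c) (hbd : ¬ G.Adj b d) (hcd : ¬ G.Adj c d) : False := by
  have hba := hab.symm
  have hca : ¬ G.Adj c a := fun h' => hac h'.symm
  have hda : ¬ G.Adj d a := fun h' => had h'.symm
  have hcb : ¬ G.Adj c b := fun h' => hbc h'.symm
  have hdb : ¬ G.Adj d b := fun h' => hbd h'.symm
  have hdc : ¬ G.Adj d c := fun h' => hcd h'.symm
  have h1 := hab.ne
  apply h
  refine ⟨⟨⟨![a,b,c,d], ?_⟩, ?_⟩⟩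
  · intro i j hij
    fin_cases i <;> fin_cases j <;> simp_all
  · intro i j
    fin_cases i <;> fin_cases j <;>
      simp_all [K2u2K1, Sym2.eq_iff, DFunLike.coe]

lemma walk_closed {V : Type*} {G : SimpleGraph V} {S : Set V}
    (hS : ∀ ⦃w z : V⦄, w ∈ S → G.Adj w z → z ∈ S) :
    ∀ {w z : V}, G.Walk w z → w ∈ S → z ∈ S := by
  intro w z p
  induction p with
  | nil => exact id
  | cons h q ih => exact fun hw => ih (hS hw h)

theorem diamond_codiamond_free_homogeneous_nonadj {V : Type*} [Fintype V]
    (G : SimpleGraph V) (hconn : G.Connected) (hcoconn : Gᶜ.Connected)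
    (hdiamond : InducedFree diamond G) (hcodiamond : InducedFree K2u2K1 G)
    (U : Set V) (hU : IsHomogeneousSet G U)
    (hnonadj : ∃ x ∈ U, ∃ y ∈ U, x ≠ y ∧ ¬ G.Adj x y) :
    _root_.IsBipartite G := by
  classical
  obtain ⟨x, hxU, y, hyU, hxy, hxyn⟩ := hnonadj
  obtain ⟨hc2, hcle, hhom⟩ := hU
  -- there is a vertex outside U
  have houtside : ∃ v, v ∉ U := by
    by_contra hno
    push_neg at hno
    have hUuniv : U = Set.univ := Set.eq_univ_of_forall hno
    have h1 : U.ncard = Fintype.card V := by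
      rw [hUuniv, Set.ncard_univ, Nat.card_eq_fintype_card]
    omega
  -- every vertex outside U is "all" or "none"
  -- A : vertices outside U adjacent to all of U
  set A : Set V := {v | v ∉ U ∧ ∀ u ∈ U, G.Adj v u} with hA
  -- A is nonempty
  have hAne : ∃ a, a ∈ A := by
    by_contra hno
    push_neg at hno
    have hclosed : ∀ ⦃w z : V⦄, w ∈ U → G.Adj w z → z ∈ U := by
      intro w z hw hwz
      by_contra hz
      rcases hhom z hz with hall | hnone
      · exact hno z ⟨hz, hall⟩
      · exact hnone w hw hwz.symm
    obtain ⟨v0, hv0⟩ := houtside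
    obtain ⟨p⟩ := hconn.preconnected x v0
    exact hv0 (walk_closed hclosed p hxU)
  -- there is a vertex outside U adjacent to none of U
  have hBne : ∃ b, b ∉ U ∧ ∀ u ∈ U, ¬ G.Adj b u := by
    by_contra hno
    push_neg at hno
    have hclosed : ∀ ⦃w z : V⦄, w ∈ U → Gᶜ.Adj w z → z ∈ U := by
      intro w z hw hwz
      by_contra hz
      rcases hhom z hz with hall | hnone
      · exact hwz.2 (hall w hw).symm
      · obtain ⟨u, hu, hadj⟩ := hno z hz
        exact hnone u hu hadj
    obtain ⟨v0, hv0⟩ := houtside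
    obtain ⟨p⟩ := hcoconn.preconnected x v0
    exact hv0 (walk_closed hclosed p hxU)
  obtain ⟨a, haU, hall⟩ := hAne
  obtain ⟨b, hbU, hnone⟩ := hBne
  -- U is independent
  have hUindep : ∀ u ∈ U, ∀ v ∈ U, ¬ G.Adj u v := by
    intro u huU v hvU huv
    -- every w ∈ U other than u,v is adjacent to both or neither of u,v
    have key : ∀ w ∈ U, w ≠ u → w ≠ v → (G.Adj w u ∧ G.Adj w v) ∨ (¬ G.Adj w u ∧ ¬ G.Adj w v) := by
      intro w hwU hwu hwv
      by_cases h1 : G.Adj w u <;> by_cases h2 : G.Adj w v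
      · exact Or.inl ⟨h1, h2⟩
      · exact (no_diamond hdiamond (fun h => hwv h.symm) (hall u huU) (hall v hvU)
          (hall w hwU) huv h1.symm (fun h => h2 h.symm)).elim
      · exact (no_diamond hdiamond (fun h => hwu h.symm) (hall v hvU) (hall u huU)
          (hall w hwU) huv.symm h2.symm (fun h => h1 h.symm)).elim
      · exact Or.inr ⟨h1, h2⟩
    -- find z ∈ U nonadjacent to both u and v
    have hz : ∃ z ∈ U, z ≠ u ∧ z ≠ v ∧ ¬ G.Adj z u ∧ ¬ G.Adj z v := by
      by_cases hxu : x = u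
      · subst hxu
        have hyu : y ≠ x := fun h => hxy h.symm
        have hyv : y ≠ v := fun h => hxyn (h ▸ huv)
        rcases key y hyU hyu hyv with ⟨h1, h2⟩ | ⟨h1, h2⟩
        · exact absurd h1.symm hxyn
        · exact ⟨y, hyU, hyu, hyv, h1, h2⟩
      · by_cases hxv : x = v
        · subst hxv
          have hyv : y ≠ x := fun h => hxy h.symm
          have hyu : y ≠ u := fun h => hxyn (h ▸ huv.symm)
          rcases key y hyU hyu hyv with ⟨h1, h2⟩ | ⟨h1, h2⟩
          · exact absurd h2.symm hxyn
          · exact ⟨y, hyU, hyu, hyv, h1, h2⟩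
        · rcases key x hxU hxu hxv with ⟨h1, h2⟩ | ⟨h1, h2⟩
          · have hyu : y ≠ u := fun h => hxyn (h ▸ h1)
            have hyv : y ≠ v := fun h => hxyn (h ▸ h2)
            rcases key y hyU hyu hyv with ⟨h3, h4⟩ | ⟨h3, h4⟩
            · exact (no_diamond hdiamond hxy (hall u huU) (hall x hxU)
                (hall y hyU) h1.symm h3.symm hxyn).elim
            · exact ⟨y, hyU, hyu, hyv, h3, h4⟩
          · exact ⟨x, hxU, hxu, hxv, h1, h2⟩
    obtain ⟨z, hzU, hzu, hzv, hz1, hz2⟩ := hz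
    exact no_codiamond hcodiamond (fun h => hzu h.symm) (by rintro rfl; exact hbU huU)
      (fun h => hzv h.symm) (by rintro rfl; exact hbU hvU) (by rintro rfl; exact hbU hzU)
      huv (fun h => hz1 h.symm) (fun h => hnone u huU h.symm)
      (fun h => hz2 h.symm) (fun h => hnone v hvU h.symm) (fun h => hnone z hzU h.symm)
  -- conclude: A is a bipartition class
  refine ⟨A, fun p q hpq => ?_⟩
  by_cases hpA : p ∈ A <;> by_cases hqA : q ∈ A
  · -- both in A: diamond p q x y
    exact (no_diamond hdiamond hxy hpq (hpA.2 x hxU) (hpA.2 y hyU)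
      (hqA.2 x hxU) (hqA.2 y hyU) hxyn).elim
  · exact Or.inl ⟨hpA, hqA⟩
  · exact Or.inr ⟨hpA, hqA⟩
  · -- neither in A: contradiction
    exfalso
    have hstat : ∀ r, r ∉ A → r ∈ U ∨ (r ∉ U ∧ ∀ u ∈ U, ¬ G.Adj r u) := by
      intro r hr
      by_cases hrU : r ∈ U
      · exact Or.inl hrU
      · rcases hhom r hrU with hall' | hnone'
        · exact absurd ⟨hrU, hall'⟩ hr
        · exact Or.inr ⟨hrU, hnone'⟩
    rcases hstat p hpA with hpU | ⟨hpU, hpn⟩ <;> rcases hstat q hqA with hqU | ⟨hqU, hqn⟩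
    · exact hUindep p hpU q hqU hpq
    · exact hqn p hpU hpq.symm
    · exact hpn q hqU hpq
    · exact no_codiamond hcodiamond (by rintro rfl; exact hpU hxU) (by rintro rfl; exact hpU hyU)
        (by rintro rfl; exact hqU hxU) (by rintro rfl; exact hqU hyU) hxy
        hpq (hpn x hxU) (hpn y hyU) (hqn x hxU) (hqn y hyU) hxyn
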